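/- Let u, v : (0,∞) → ℂ with u twice differentiable and v differentiable. For r > 0 and z ∈ ℂ∖{0} define the 2×2 matrices A(z,r) = −(i r²/16)σ₃ − (i v(r)/(4z))σ₁ + (i/z²) e^{−i u(r) σ₁/2} σ₃ e^{i u(r) σ₁/2} and B(z,r) = −(i r z/8)σ₃ − (i u'(r)/2)σ₁, where σ₁, σ₂, σ₃ are the Pauli matrices. Then the zero-curvature equation ∂_r A(z,r) − ∂_z B(z,r) + [A(z,r), B(z,r)] = 0 holds for all z ∈ ℂ∖{0} and all r > 0 if and only if v = r u' and u satisfies the radial sine-Gordon equation u'' + u'/r + sin u = 0. -/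

import Mathlib

open Matrix

/-- Pauli matrix `σ₁`. -/
def pauli1 : Matrix (Fin 2) (Fin 2) ℂ := !![0, 1; 1, 0]

/-- Pauli matrix `σ₂`. -/
def pauli2 : Matrix (Fin 2) (Fin 2) ℂ := !![0, -Complex.I; Complex.I, 0]

/-- Pauli matrix `σ₃`. -/
def pauli3 : Matrix (Fin 2) (Fin 2) ℂ := !![1, 0; 0, -1]

/-- `A(z,r) = −(ir²/16)σ₃ − (iv(r)/(4z))σ₁ + (i/z²) e^{−iu σ₁/2} σ₃ e^{iu σ₁/2}`,
using `e^{−iuσ₁/2} σ₃ e^{iuσ₁/2} = cos(u)σ₃ − sin(u)σ₂`. -/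
noncomputable def laxA (u v : ℝ → ℂ) (z : ℂ) (r : ℝ) : Matrix (Fin 2) (Fin 2) ℂ :=
  (-(Complex.I * (r : ℂ) ^ 2 / 16)) • pauli3 - (Complex.I * v r / (4 * z)) • pauli1 +
    (Complex.I / z ^ 2) • (Complex.cos (u r) • pauli3 - Complex.sin (u r) • pauli2)

/-- `B(z,r) = −(irz/8)σ₃ − (iu'(r)/2)σ₁`. -/
noncomputable def laxB (du : ℝ → ℂ) (z : ℂ) (r : ℝ) : Matrix (Fin 2) (Fin 2) ℂ :=
  (-(Complex.I * (r : ℂ) * z / 8)) • pauli3 - (Complex.I * du r / 2) • pauli1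

lemma laxA_eq (u v : ℝ → ℂ) (z : ℂ) (r : ℝ) :
    laxA u v z r =
      !![-(Complex.I * (r:ℂ)^2/16) + Complex.I * Complex.cos (u r)/z^2,
         -(Complex.I * v r/(4*z)) - Complex.sin (u r)/z^2;
         -(Complex.I * v r/(4*z)) + Complex.sin (u r)/z^2,
         Complex.I * (r:ℂ)^2/16 - Complex.I * Complex.cos (u r)/z^2] := by
  ext i j
  fin_cases i <;> fin_cases j <;>
    simp [laxA, pauli1, pauli2, pauli3] <;> ring_nf <;> simp [Complex.I_sq] <;> ring_nf

lemma laxB_eq (du : ℝ → ℂ) (z : ℂ) (r : ℝ) :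
    laxB du z r =
      !![-(Complex.I * (r:ℂ) * z/8), -(Complex.I * du r/2);
         -(Complex.I * du r/2), Complex.I * (r:ℂ) * z/8] := by
  ext i j
  fin_cases i <;> fin_cases j <;>
    simp [laxB, pauli1, pauli2, pauli3] <;> ring_nf

private lemma HasDerivAt.congr_d {𝕜 : Type*} [NontriviallyNormedField 𝕜] {F : Type*}
    [NormedAddCommGroup F] [NormedSpace 𝕜 F] {f : 𝕜 → F} {f' g' : F} {x : 𝕜}
    (h : HasDerivAt f f' x) (e : f' = g') : HasDerivAt f g' x := e ▸ h

private lemma HasDerivAt.congr_f {𝕜 : Type*} [NontriviallyNormedField 𝕜] {F : Type*}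
    [NormedAddCommGroup F] [NormedSpace 𝕜 F] {f g : 𝕜 → F} {f' : F} {x : 𝕜}
    (h : HasDerivAt f f' x) (e : ∀ s, g s = f s) : HasDerivAt g f' x :=
  h.congr_of_eventuallyEq (Filter.Eventually.of_forall e)

/-- derivative of `laxA` in `r`, entrywise. -/
noncomputable def laxAr (u du dv : ℝ → ℂ) (z : ℂ) (r : ℝ) : Matrix (Fin 2) (Fin 2) ℂ :=
  !![-(Complex.I * (r:ℂ)/8) - Complex.I * Complex.sin (u r) * du r/z^2,
     -(Complex.I * dv r/(4*z)) - Complex.cos (u r) * du r/z^2;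
     -(Complex.I * dv r/(4*z)) + Complex.cos (u r) * du r/z^2,
     Complex.I * (r:ℂ)/8 + Complex.I * Complex.sin (u r) * du r/z^2]

noncomputable def laxBz (r : ℝ) : Matrix (Fin 2) (Fin 2) ℂ :=
  !![-(Complex.I * (r:ℂ)/8), 0; 0, Complex.I * (r:ℂ)/8]

lemma hasDerivAt_laxA {u v du dv : ℝ → ℂ} (z : ℂ) {r : ℝ}
    (hu : HasDerivAt u (du r) r) (hv : HasDerivAt v (dv r) r) (i j : Fin 2) :
    HasDerivAt (fun s : ℝ => laxA u v z s i j) (laxAr u du dv z r i j) r := by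
  have hr : HasDerivAt (fun s : ℝ => ((s:ℂ))) 1 r := by
    simpa using HasDerivAt.ofReal_comp (hasDerivAt_id r)
  have h3 : HasDerivAt (fun s : ℝ => Complex.I * (s:ℂ)^2/16) (Complex.I * (r:ℂ)/8) r := by
    have h0 : HasDerivAt (fun s : ℝ => ((s^2 : ℝ) : ℂ)) (((2:ℝ)*r^1 : ℝ) : ℂ) r :=
      (hasDerivAt_pow 2 r).ofReal_comp
    exact (((h0.congr_f (fun s => by push_cast; ring)).const_mul Complex.I).div_const 16).congr_d
      (by push_cast; ring)
  have hcosP : HasDerivAt (fun s : ℝ => Complex.I * Complex.cos (u s)/z^2)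
      (-(Complex.I * Complex.sin (u r) * du r/z^2)) r := by
    have h1 : HasDerivAt (fun s : ℝ => Complex.cos (u s)) (du r • (-Complex.sin (u r))) r :=
      (Complex.hasDerivAt_cos (u r)).scomp r hu
    exact ((h1.const_mul Complex.I).div_const (z^2)).congr_d (by simp; ring)
  have hsin : HasDerivAt (fun s : ℝ => Complex.sin (u s)/z^2)
      (Complex.cos (u r) * du r/z^2) r := by
    have h1 : HasDerivAt (fun s : ℝ => Complex.sin (u s)) (du r • (Complex.cos (u r))) r :=
      (Complex.hasDerivAt_sin (u r)).scomp r hu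
    exact (h1.div_const (z^2)).congr_d (by simp; ring)
  have hvv : HasDerivAt (fun s : ℝ => -(Complex.I * v s/(4*z))) (-(Complex.I * dv r/(4*z))) r :=
    ((hv.const_mul Complex.I).div_const (4*z)).neg
  have hfun : ∀ s : ℝ, laxA u v z s = _ := fun s => laxA_eq u v z s
  fin_cases i <;> fin_cases j <;>
    simp only [laxA_eq, laxAr, Fin.isValue, Matrix.of_apply, Matrix.cons_val', Matrix.cons_val_zero,
      Matrix.cons_val_one, Matrix.head_cons, Matrix.empty_val', Matrix.cons_val_fin_one,
      Matrix.head_fin_const, Fin.mk_zero, Fin.mk_one]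
  · exact (h3.neg.add hcosP).congr_d (by ring)
  · exact hvv.sub hsin
  · exact hvv.add hsin
  · exact (h3.sub hcosP).congr_d (by ring)

lemma hasDerivAt_laxB (du : ℝ → ℂ) (z : ℂ) (r : ℝ) (i j : Fin 2) :
    HasDerivAt (fun w : ℂ => laxB du w r i j) (laxBz r i j) z := by
  have h0 : HasDerivAt (fun w : ℂ => -(Complex.I * (r:ℂ) * w/8)) (-(Complex.I * (r:ℂ)/8)) z := by
    exact (((hasDerivAt_id z).const_mul (Complex.I * (r:ℂ))).div_const 8).neg.congr_d (by ring)
  fin_cases i <;> fin_cases j <;>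
    simp only [laxB_eq, laxBz, Fin.isValue, Matrix.of_apply, Matrix.cons_val', Matrix.cons_val_zero,
      Matrix.cons_val_one, Matrix.head_cons, Matrix.empty_val', Matrix.cons_val_fin_one,
      Matrix.head_fin_const, Fin.mk_zero, Fin.mk_one]
  · exact h0
  · exact hasDerivAt_const z _
  · exact hasDerivAt_const z _
  · exact (h0.neg.congr_f (fun w => by simp only [Pi.neg_apply]; ring)).congr_d (by ring)

set_option maxHeartbeats 2000000 in
lemma lhs_eq (u v du dv : ℝ → ℂ) {z : ℂ} (hz : z ≠ 0) (r : ℝ) :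
    laxAr u du dv z r - laxBz r +
      (laxA u v z r * laxB du z r - laxB du z r * laxA u v z r) =
    !![0, -(Complex.I * (dv r + (r:ℂ) * Complex.sin (u r)) / (4*z)) +
          (r:ℂ) * (v r - (r:ℂ) * du r) / 16;
       -(Complex.I * (dv r + (r:ℂ) * Complex.sin (u r)) / (4*z)) -
          (r:ℂ) * (v r - (r:ℂ) * du r) / 16, 0] := by
  rw [laxA_eq, laxB_eq, laxAr, laxBz, Matrix.mul_fin_two, Matrix.mul_fin_two]
  ext i j
  fin_cases i <;> fin_cases j <;>
    simp only [Fin.isValue, Matrix.sub_apply, Matrix.add_apply, Matrix.of_apply,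
      Matrix.cons_val', Matrix.cons_val_zero, Matrix.cons_val_one, Matrix.head_cons,
      Matrix.empty_val', Matrix.cons_val_fin_one, Matrix.head_fin_const,
      Fin.mk_zero, Fin.mk_one]
  all_goals have h5 : z^5 * z⁻¹^5 = 1 := by rw [← mul_pow, mul_inv_cancel₀ hz]; norm_num
  all_goals field_simp
  all_goals ring_nf
  all_goals simp [Complex.I_sq]
  · ring
  · ring

lemma key (u v du dv : ℝ → ℂ) {z : ℂ} (hz : z ≠ 0) {r : ℝ} (hrne : (r:ℂ) ≠ 0) :
    laxAr u du dv z r - laxBz r +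
      (laxA u v z r * laxB du z r - laxB du z r * laxA u v z r) = 0 ↔
    (v r = (r:ℂ) * du r ∧ dv r = -((r:ℂ) * Complex.sin (u r))) := by
  rw [lhs_eq u v du dv hz r]
  have hw : z * z⁻¹ = 1 := mul_inv_cancel₀ hz
  constructor
  · intro h
    have h01 := congrFun (congrFun h 0) 1
    have h10 := congrFun (congrFun h 1) 0
    simp only [Fin.isValue, Matrix.of_apply, Matrix.cons_val', Matrix.cons_val_zero,
      Matrix.cons_val_one, Matrix.head_cons, Matrix.empty_val', Matrix.cons_val_fin_one,
      Matrix.head_fin_const, Matrix.zero_apply] at h01 h10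
    have hsub : (r:ℂ) * (v r - (r:ℂ) * du r) = 0 := by
      linear_combination 8*h01 - 8*h10
    have hsum : Complex.I * (dv r + (r:ℂ) * Complex.sin (u r)) = 0 := by
      linear_combination (-2*z)*h01 + (-2*z)*h10 -
        (Complex.I*(dv r + (r:ℂ)*Complex.sin (u r)))*hw
    constructor
    · have h := (mul_eq_zero.mp hsub).resolve_left hrne
      linear_combination h
    · have h := (mul_eq_zero.mp hsum).resolve_left Complex.I_ne_zero
      linear_combination h
  · rintro ⟨h1, h2⟩
    ext i j
    fin_cases i <;> fin_cases j <;>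
      simp [h1, h2] <;> ring_nf

lemma dv_rel (u v du dv ddu : ℝ → ℂ)
    (hddu : ∀ r ∈ Set.Ioi (0:ℝ), HasDerivAt du (ddu r) r)
    (hdv : ∀ r ∈ Set.Ioi (0:ℝ), HasDerivAt v (dv r) r)
    (hv : ∀ r ∈ Set.Ioi (0:ℝ), v r = (r:ℂ) * du r) :
    ∀ r ∈ Set.Ioi (0:ℝ), dv r = du r + (r:ℂ) * ddu r := by
  intro r hr
  have hid : HasDerivAt (fun s : ℝ => ((s:ℂ))) 1 r := by
    simpa using HasDerivAt.ofReal_comp (hasDerivAt_id r)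
  have h1 : HasDerivAt (fun s : ℝ => (s:ℂ) * du s) (1 * du r + (r:ℂ) * ddu r) r :=
    hid.mul (hddu r hr)
  have h2 : HasDerivAt v (1 * du r + (r:ℂ) * ddu r) r :=
    h1.congr_of_eventuallyEq (Filter.eventuallyEq_of_mem (isOpen_Ioi.mem_nhds hr) hv)
  have := (hdv r hr).unique h2
  rw [this]; ring


/-- The zero-curvature equation `∂_r A − ∂_z B + [A,B] = 0` holds for all `z ≠ 0`,
`r > 0` if and only if `v = r u'` and `u` satisfies the radial sine-Gordon equation
`u'' + u'/r + sin u = 0`. -/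
theorem zero_curvature_iff_sineGordon (u v du dv ddu : ℝ → ℂ)
    (hdu : ∀ r ∈ Set.Ioi (0 : ℝ), HasDerivAt u (du r) r)
    (hddu : ∀ r ∈ Set.Ioi (0 : ℝ), HasDerivAt du (ddu r) r)
    (hdv : ∀ r ∈ Set.Ioi (0 : ℝ), HasDerivAt v (dv r) r) :
    (∀ z : ℂ, z ≠ 0 → ∀ r ∈ Set.Ioi (0 : ℝ),
      ∃ Ar Bz : Matrix (Fin 2) (Fin 2) ℂ,
        (∀ i j : Fin 2, HasDerivAt (fun s : ℝ => laxA u v z s i j) (Ar i j) r) ∧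
        (∀ i j : Fin 2, HasDerivAt (fun w : ℂ => laxB du w r i j) (Bz i j) z) ∧
        Ar - Bz + (laxA u v z r * laxB du z r - laxB du z r * laxA u v z r) = 0) ↔
    (∀ r ∈ Set.Ioi (0 : ℝ),
      v r = (r : ℂ) * du r ∧
      ddu r + du r / (r : ℂ) + Complex.sin (u r) = 0) := by
  constructor
  · intro h
    have hall : ∀ r ∈ Set.Ioi (0:ℝ), v r = (r:ℂ) * du r ∧
        dv r = -((r:ℂ) * Complex.sin (u r)) := by
      intro r hr
      have hrne : (r:ℂ) ≠ 0 := Complex.ofReal_ne_zero.mpr (ne_of_gt (Set.mem_Ioi.mp hr))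
      obtain ⟨Ar, Bz, hA, hB, heq⟩ := h 1 one_ne_zero r hr
      have hAr : Ar = laxAr u du dv 1 r := by
        ext i j; exact (hA i j).unique (hasDerivAt_laxA 1 (hdu r hr) (hdv r hr) i j)
      have hBz : Bz = laxBz r := by
        ext i j; exact (hB i j).unique (hasDerivAt_laxB du 1 r i j)
      rw [hAr, hBz] at heq
      exact (key u v du dv one_ne_zero hrne).mp heq
    intro r hr
    have hrne : (r:ℂ) ≠ 0 := Complex.ofReal_ne_zero.mpr (ne_of_gt (Set.mem_Ioi.mp hr))
    refine ⟨(hall r hr).1, ?_⟩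
    have e1 := (hall r hr).2
    have e2 := dv_rel u v du dv ddu hddu hdv (fun s hs => (hall s hs).1) r hr
    have hwr : (r:ℂ) * (r:ℂ)⁻¹ = 1 := mul_inv_cancel₀ hrne
    linear_combination (-(r:ℂ)⁻¹)*e2 + (r:ℂ)⁻¹*e1 - (ddu r + Complex.sin (u r))*hwr
  · intro h z hz r hr
    have hrne : (r:ℂ) ≠ 0 := Complex.ofReal_ne_zero.mpr (ne_of_gt (Set.mem_Ioi.mp hr))
    refine ⟨laxAr u du dv z r, laxBz r,
      fun i j => hasDerivAt_laxA z (hdu r hr) (hdv r hr) i j,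
      fun i j => hasDerivAt_laxB du z r i j, ?_⟩
    refine (key u v du dv hz hrne).mpr ⟨(h r hr).1, ?_⟩
    have e1 := dv_rel u v du dv ddu hddu hdv (fun s hs => (h s hs).1) r hr
    have e2 := (h r hr).2
    have hwr : (r:ℂ) * (r:ℂ)⁻¹ = 1 := mul_inv_cancel₀ hrne
    linear_combination e1 + (r:ℂ)*e2 - du r * hwr
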